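/- For all h ≥ 2 and k ≥ 2, every deterministic thrifty k-way branching program solving the Boolean binary tree evaluation problem BT_2^h(k) has at least k^h states; moreover, it has at least Σ_{l=2}^{h} k^l states. -/

import Mathlib

/-! ## Tree evaluation problems -/

/-- The `k`-valued input variables of the tree evaluation problem on the complete
`d`-ary tree with `h` levels: the single variable of a height-1 tree is its leaf
value; for a tree of height `h+2`, a variable is either an entry `f_root(args)`
of the root function's table, or a variable of one of the `d` principal subtrees. -/
inductive TEVar (d k : ℕ) : ℕ → Type where
  | leaf : TEVar d k 1
  | root {h : ℕ} (args : Fin d → Fin k) : TEVar d k (h + 2)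
  | child {h : ℕ} (j : Fin d) (x : TEVar d k (h + 1)) : TEVar d k (h + 2)

/-- The value of the root of the tree, computed bottom-up from an assignment of
values to all input variables. (For the degenerate height 0 it returns a junk value.) -/
def rootValue (d k : ℕ) (hk : 0 < k) : (h : ℕ) → (TEVar d k h → Fin k) → Fin k
  | 0, _ => ⟨0, hk⟩
  | 1, I => I .leaf
  | (h + 2), I => I (.root fun j => rootValue d k hk (h + 1) fun x => I (.child j x))

/-- The Boolean tree evaluation problem `BT_d^h(k)`: does the root have value 1
(represented by `(0 : Fin k)`)? -/
def BTfun (d k : ℕ) (hk : 0 < k) (h : ℕ) (I : TEVar d k h → Fin k) : Bool :=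
  decide (rootValue d k hk h I = ⟨0, hk⟩)

/-- `ThriftyVar d k hk h I v` holds iff querying variable `v` on input `I` is a
thrifty query: if `v` is an entry `f_i(args)` of the function table of an internal
node `i`, then `args` must be the tuple of correct values of the children of `i`. -/
def ThriftyVar (d k : ℕ) (hk : 0 < k) : (h : ℕ) → (TEVar d k h → Fin k) → TEVar d k h → Prop
  | 0, _, _ => True
  | 1, _, _ => True
  | (h + 2), I, .root args =>
      args = fun j => rootValue d k hk (h + 1) fun x => I (.child j x)
  | (h + 2), I, .child j x =>
      ThriftyVar d k hk (h + 1) (fun y => I (.child j y)) x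

/-! ## k-way branching programs -/

/-- A deterministic `k`-way branching program with input variables `V` (each taking
values in `[k] = Fin k`) and outputs in `R`. Each state is either a non-final state
labelled with the variable it queries (`Sum.inl v`), with `k` outedges given by
`next`, or a final state labelled with an output (`Sum.inr r`). -/
structure DBP (V : Type) (k : ℕ) (R : Type) where
  Q : Type
  fin : Fintype Q
  start : Q
  label : Q → V ⊕ R
  next : Q → Fin k → Q

namespace DBP

variable {V : Type} {k : ℕ} {R : Type}

/-- The size of a branching program is its number of states. -/
def size (B : DBP V k R) : ℕ := @Fintype.card B.Q B.fin

/-- One deterministic step on input `I` (final states are absorbing). -/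
def step (B : DBP V k R) (I : V → Fin k) (q : B.Q) : B.Q :=
  match B.label q with
  | .inl v => B.next q (I v)
  | .inr _ => q

/-- `B` computes the total function `f`: on every input, the computation reaches the
final state labelled with the correct output. -/
def Computes (B : DBP V k R) (f : (V → Fin k) → R) : Prop :=
  ∀ I : V → Fin k, ∃ t : ℕ, B.label ((B.step I)^[t] B.start) = .inr (f I)

end DBP

/-- A nondeterministic `k`-way branching program: as in `DBP`, but a non-final state
may have any number of outedges with any labels in `Fin k`, given by the edge
relation `edge q a q'`. -/
structure NBP (V : Type) (k : ℕ) (R : Type) where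
  Q : Type
  fin : Fintype Q
  start : Q
  label : Q → V ⊕ R
  edge : Q → Fin k → Q → Prop

namespace NBP

variable {V : Type} {k : ℕ} {R : Type}

/-- The size of a branching program is its number of states. -/
def size (B : NBP V k R) : ℕ := @Fintype.card B.Q B.fin

/-- One nondeterministic step on input `I`: follow an edge out of a non-final state
whose label matches the value of the queried variable. -/
def Step (B : NBP V k R) (I : V → Fin k) (q q' : B.Q) : Prop :=
  ∃ v, B.label q = .inl v ∧ B.edge q (I v) q'

/-- Some computation of `B` on input `I` ends in a final state labelled `r`. -/
def Outputs (B : NBP V k R) (I : V → Fin k) (r : R) : Prop :=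
  ∃ q, Relation.ReflTransGen (B.Step I) B.start q ∧ B.label q = .inr r

/-- `B` computes the total function `f`: on every input some computation ends in a
final state, and every computation ending in a final state ends in the one labelled
with the correct output. -/
def Computes (B : NBP V k R) (f : (V → Fin k) → R) : Prop :=
  ∀ (I : V → Fin k) (r : R), B.Outputs I r ↔ r = f I

end NBP

/-- A deterministic branching program for a tree evaluation problem is thrifty if on
every input, every query made during the computation is a thrifty query. -/
def DBPThrifty {R : Type} (d k h : ℕ) (hk : 0 < k) (B : DBP (TEVar d k h) k R) : Prop :=
  ∀ (I : TEVar d k h → Fin k) (t : ℕ) (v : TEVar d k h),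
    B.label ((B.step I)^[t] B.start) = .inl v → ThriftyVar d k hk h I v

/-- A nondeterministic branching program for a tree evaluation problem is thrifty if
for every input, every computation ending in a final state makes only thrifty
queries. -/
def NBPThrifty {R : Type} (d k h : ℕ) (hk : 0 < k) (B : NBP (TEVar d k h) k R) : Prop :=
  ∀ (I : TEVar d k h → Fin k) (n : ℕ) (path : ℕ → B.Q),
    path 0 = B.start →
    (∀ t < n, B.Step I (path t) (path (t + 1))) →
    (∃ r, B.label (path n) = .inr r) →
    ∀ t < n, ∀ v, B.label (path t) = .inl v → ThriftyVar d k hk h I v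

namespace TELB

open Classical

variable {k : ℕ}

/-- flip a value of `Fin k` so that membership in `{0}` flips. -/
def flipv (hk2 : 2 ≤ k) (a : Fin k) : Fin k :=
  if a = ⟨0, by omega⟩ then ⟨1, by omega⟩ else ⟨0, by omega⟩

lemma flipv_ne (hk2 : 2 ≤ k) (a : Fin k) : flipv hk2 a ≠ a := by
  unfold flipv
  split
  · rename_i hc; rw [hc]; intro hcon; exact absurd (congrArg Fin.val hcon) (by simp)
  · rename_i hc; intro hcon; exact hc hcon.symm

lemma flipv_zero_iff (hk2 : 2 ≤ k) (a : Fin k) :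
    flipv hk2 a = ⟨0, by omega⟩ ↔ ¬ (a = ⟨0, by omega⟩) := by
  unfold flipv
  by_cases hc : a = ⟨0, by omega⟩ <;> simp [hc, Fin.ext_iff]

/-- flip a direction in `Fin 2`. -/
def flipd (d : Fin 2) : Fin 2 := if d = 0 then 1 else 0

lemma flipd_ne (d : Fin 2) : flipd d ≠ d := by fin_cases d <;> decide

/-- The table-entry variable of the internal node with root-down address `rd`,
at arguments `args`. -/
def cellVar : (m : ℕ) → (rd : List (Fin 2)) → (Fin 2 → Fin k) → rd.length + 2 ≤ m → TEVar 2 k m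
  | m + 2, [], args, _ => .root args
  | m + 2, d :: rd, args, hle =>
      .child d (cellVar (m + 1) rd args (by simp only [List.length_cons] at hle; omega))
  | 0, _, _, hle => absurd hle (by omega)
  | 1, _, _, hle => absurd hle (by omega)

/-- The leaf variable with root-down address `rd`. -/
def leafVar : (m : ℕ) → (rd : List (Fin 2)) → rd.length + 1 = m → TEVar 2 k m
  | 1, [], _ => .leaf
  | m + 2, d :: rd, he => .child d (leafVar (m + 1) rd (by simp only [List.length_cons] at he; omega))
  | 0, _, he => absurd he (by omega)
  | 1, _ :: _, he => absurd he (by simp at he)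
  | _ + 2, [], he => absurd he (by simp at he)

/-- Restriction of an input to the subtree of child `d`. -/
def restr {m : ℕ} (I : TEVar 2 k (m + 2) → Fin k) (d : Fin 2) : TEVar 2 k (m + 1) → Fin k :=
  fun x => I (.child d x)

/-- The (correct, bottom-up) value of the node with root-down address `rd`. -/
def valNode (hk : 0 < k) : (m : ℕ) → (TEVar 2 k m → Fin k) → (rd : List (Fin 2)) →
    rd.length + 1 ≤ m → Fin k
  | m, I, [], _ => rootValue 2 k hk m I
  | m + 2, I, d :: rd, hle => valNode hk (m + 1) (restr I d) rd (by simp only [List.length_cons] at hle; omega)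
  | 0, _, _ :: _, hle => absurd hle (by omega)
  | 1, _, _ :: _, hle => absurd hle (by simp at hle)

/-- The tuple of correct values of the two children of internal node `rd`. -/
def alphav (hk : 0 < k) (m : ℕ) (I : TEVar 2 k m → Fin k) (rd : List (Fin 2))
    (hle : rd.length + 2 ≤ m) : Fin 2 → Fin k :=
  fun i => valNode hk m I (rd ++ [i]) (by simp; omega)

/-- The address of the node a variable belongs to. -/
def varPath : {m : ℕ} → TEVar 2 k m → List (Fin 2)
  | _, .leaf => []
  | _, .root _ => []
  | _, .child d x => d :: varPath x

lemma varPath_cellVar : ∀ (m : ℕ) (rd : List (Fin 2)) (args : Fin 2 → Fin k) (hle : _),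
    varPath (cellVar m rd args hle) = rd
  | m + 2, [], args, _ => rfl
  | m + 2, d :: rd, args, hle => by
      simp only [cellVar, varPath]
      rw [varPath_cellVar]
  | 0, _, _, hle => absurd hle (by omega)
  | 1, _, _, hle => absurd hle (by omega)

lemma varPath_leafVar : ∀ (m : ℕ) (rd : List (Fin 2)) (he : _),
    varPath (leafVar (k := k) m rd he) = rd
  | 1, [], _ => rfl
  | m + 2, d :: rd, he => by
      simp only [leafVar, varPath]
      rw [varPath_leafVar]
  | 0, _, he => absurd he (by omega)
  | 1, _ :: _, he => absurd he (by simp at he)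
  | _ + 2, [], he => absurd he (by simp at he)

lemma cellVar_inj_args : ∀ (m : ℕ) (rd : List (Fin 2)) (args args' : Fin 2 → Fin k)
    (hle hle' : _), cellVar m rd args hle = cellVar m rd args' hle' → args = args'
  | m + 2, [], args, args', _, _, hEq => by
      simpa [cellVar] using hEq
  | m + 2, d :: rd, args, args', hle, hle', hEq => by
      simp only [cellVar, TEVar.child.injEq] at hEq
      exact cellVar_inj_args (m + 1) rd args args' _ _ hEq.2
  | 0, _, _, _, hle, _, _ => absurd hle (by omega)
  | 1, _, _, _, hle, _, _ => absurd hle (by omega)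

lemma cellVar_inj {m : ℕ} {rd rd' : List (Fin 2)} {args args' : Fin 2 → Fin k}
    {hle : _} {hle' : _} (hEq : cellVar m rd args hle = cellVar m rd' args' hle') :
    rd = rd' ∧ args = args' := by
  have hp : rd = rd' := by
    have := congrArg varPath hEq
    rwa [varPath_cellVar, varPath_cellVar] at this
  subst hp
  exact ⟨rfl, cellVar_inj_args m rd args args' hle hle' hEq⟩

lemma cellVar_ne_leafVar : ∀ (m : ℕ) (rd rd' : List (Fin 2)) (args : Fin 2 → Fin k)
    (hle : _) (he : _), cellVar m rd args hle ≠ leafVar m rd' he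
  | m + 2, [], d' :: rd', args, hle, he => by simp [cellVar, leafVar]
  | m + 2, d :: rd, d' :: rd', args, hle, he => by
      simp only [cellVar, leafVar, ne_eq, TEVar.child.injEq, not_and]
      intro hd
      subst hd
      simpa using cellVar_ne_leafVar (m + 1) rd rd' args _ _
  | m + 2, _, [], args, hle, he => absurd he (by simp at he)
  | 0, _, _, _, hle, _ => absurd hle (by omega)
  | 1, _, _, _, hle, _ => absurd hle (by omega)

lemma leafVar_inj {m : ℕ} {rd rd' : List (Fin 2)} {he : _} {he' : _}
    (hEq : leafVar (k := k) m rd he = leafVar m rd' he') : rd = rd' := by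
  have := congrArg varPath hEq
  rwa [varPath_leafVar, varPath_leafVar] at this

end TELB

namespace TELB

variable {k : ℕ}

lemma valNode_path_congr (hk : 0 < k) {m : ℕ} {I : TEVar 2 k m → Fin k}
    {rd rd' : List (Fin 2)} {hle : _} (h : rd = rd') :
    valNode hk m I rd hle = valNode hk m I rd' (h ▸ hle) := by subst h; rfl

lemma alphav_cons (hk : 0 < k) {m : ℕ} (I : TEVar 2 k (m + 2) → Fin k) (d : Fin 2)
    (rd : List (Fin 2)) (hle : (d :: rd).length + 2 ≤ m + 2) :
    alphav hk (m + 2) I (d :: rd) hle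
      = alphav hk (m + 1) (restr I d) rd (by simp only [List.length_cons] at hle; omega) := by
  funext i
  rfl

lemma valNode_nil (hk : 0 < k) {m : ℕ} (I : TEVar 2 k m → Fin k) (hle : [].length + 1 ≤ m) :
    valNode hk m I [] hle = rootValue 2 k hk m I := by rw [valNode]

lemma valNode_cons (hk : 0 < k) {m : ℕ} (I : TEVar 2 k (m + 2) → Fin k) (d : Fin 2)
    (rd : List (Fin 2)) (hle : (d :: rd).length + 1 ≤ m + 2) :
    valNode hk (m + 2) I (d :: rd) hle
      = valNode hk (m + 1) (restr I d) rd (by simp only [List.length_cons] at hle; omega) :=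
  rfl

lemma alphav_nil (hk : 0 < k) {m : ℕ} (I : TEVar 2 k (m + 2) → Fin k)
    (hle : [].length + 2 ≤ m + 2) :
    alphav hk (m + 2) I [] hle = fun j => rootValue 2 k hk (m + 1) fun x => I (.child j x) := by
  funext j
  show valNode hk (m + 2) I [j] _ = _
  rw [valNode_cons, valNode_nil]
  rfl


lemma valNode_cell (hk : 0 < k) : ∀ (m : ℕ) (I : TEVar 2 k m → Fin k) (rd : List (Fin 2))
    (hle : rd.length + 2 ≤ m),
    valNode hk m I rd (by omega) = I (cellVar m rd (alphav hk m I rd hle) hle)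
  | m + 2, I, [], hle => by
      rw [valNode_nil, rootValue, alphav_nil]
      show _ = I (.root _)
      rfl
  | m + 2, I, d :: rd, hle => by
      rw [valNode_cons, valNode_cell hk (m + 1) (restr I d) rd
        (by simp only [List.length_cons] at hle; omega), alphav_cons]
      rfl
  | 0, _, _, hle => absurd hle (by omega)
  | 1, _, _, hle => absurd hle (by omega)

lemma valNode_leaf (hk : 0 < k) : ∀ (m : ℕ) (I : TEVar 2 k m → Fin k) (rd : List (Fin 2))
    (he : rd.length + 1 = m),
    valNode hk m I rd (by omega) = I (leafVar m rd he)
  | 1, I, [], he => by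
      rw [valNode_nil, rootValue]
      rfl
  | m + 2, I, d :: rd, he => by
      rw [valNode_cons, valNode_leaf hk (m + 1) (restr I d) rd
        (by simp only [List.length_cons] at he; omega)]
      rfl
  | 0, _, _, he => absurd he (by omega)
  | 1, _, _ :: _, he => absurd he (by simp at he)
  | _ + 2, _, [], he => absurd he (by simp at he)

lemma valNode_congr (hk : 0 < k) : ∀ (m : ℕ) (I J : TEVar 2 k m → Fin k) (rd : List (Fin 2))
    (hle : rd.length + 1 ≤ m),
    (∀ v, rd <+: varPath v → I v = J v) → valNode hk m I rd hle = valNode hk m J rd hle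
  | m, I, J, [], hle, hIJ => by
      have : I = J := funext fun v => hIJ v List.nil_prefix
      rw [this]
  | m + 2, I, J, d :: rd, hle, hIJ => by
      rw [valNode_cons, valNode_cons]
      exact valNode_congr hk (m + 1) (restr I d) (restr J d) rd _ (fun v hv => by
        have : (d :: rd) <+: varPath (TEVar.child d v) := by
          simpa [varPath] using hv
        exact hIJ (TEVar.child d v) this)
  | 0, _, _, _ :: _, hle, _ => absurd hle (by omega)
  | 1, _, _, _ :: _, hle, _ => absurd hle (by simp at hle)

lemma classify : ∀ (m : ℕ) (v : TEVar 2 k m),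
    (∃ args hle, v = cellVar m (varPath v) args hle)
      ∨ (∃ he, v = leafVar m (varPath v) he) := by
  intro m v
  induction v with
  | leaf => exact Or.inr ⟨rfl, rfl⟩
  | root args => exact Or.inl ⟨args, by simp [varPath], rfl⟩
  | child d x ih =>
      rcases ih with ⟨args, hle, hx⟩ | ⟨he, hx⟩
      · refine Or.inl ⟨args, ?_, ?_⟩
        · simpa [varPath] using by omega
        · show TEVar.child d x = cellVar _ (d :: varPath x) args _
          show TEVar.child d x = TEVar.child d (cellVar _ (varPath x) args hle)
          exact congrArg _ hx
      · refine Or.inr ⟨?_, ?_⟩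
        · simpa [varPath] using by omega
        · show TEVar.child d x = leafVar _ (d :: varPath x) _
          show TEVar.child d x = TEVar.child d (leafVar _ (varPath x) he)
          exact congrArg _ hx

lemma thrifty_cell (hk : 0 < k) : ∀ (m : ℕ) (I : TEVar 2 k m → Fin k) (rd : List (Fin 2))
    (args : Fin 2 → Fin k) (hle : rd.length + 2 ≤ m),
    ThriftyVar 2 k hk m I (cellVar m rd args hle) → args = alphav hk m I rd hle
  | m + 2, I, [], args, hle, hth => by
      have : args = fun j => rootValue 2 k hk (m + 1) fun x => I (.child j x) := hth
      rw [this, alphav_nil]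
  | m + 2, I, d :: rd, args, hle, hth => by
      have hth' : ThriftyVar 2 k hk (m + 1) (restr I d) (cellVar (m + 1) rd args
          (by simp only [List.length_cons] at hle; omega)) := hth
      rw [alphav_cons]
      exact thrifty_cell hk (m + 1) (restr I d) rd args _ hth'
  | 0, _, _, _, hle, _ => absurd hle (by omega)
  | 1, _, _, _, hle, _ => absurd hle (by omega)

def tevarToSum {m : ℕ} : TEVar 2 k (m + 2) → ((Fin 2 → Fin k) ⊕ (Fin 2 × TEVar 2 k (m + 1)))
  | .root args => .inl args
  | .child d x => .inr (d, x)

lemma tevar_finite : ∀ m : ℕ, Finite (TEVar 2 k m)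
  | 0 => by
      have : IsEmpty (TEVar 2 k 0) := ⟨fun v => nomatch v⟩
      exact Finite.of_subsingleton
  | 1 => by
      have : Subsingleton (TEVar 2 k 1) := ⟨fun a b => by cases a; cases b; rfl⟩
      exact Finite.of_subsingleton
  | m + 2 => by
      have := tevar_finite (m + 1)
      refine Finite.of_injective (tevarToSum (m := m)) ?_
      intro a b hab
      cases a <;> cases b <;> simp [tevarToSum] at hab <;> try rfl
      · exact congrArg _ hab
      · rw [hab.1, hab.2]

end TELB

namespace TELB

open Classical

variable {k h : ℕ} (hk : 0 < k) (B : DBP (TEVar 2 k h) k Bool)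

/-- The computation trace. -/
def trc (I : TEVar 2 k h → Fin k) (t : ℕ) : B.Q := (B.step I)^[t] B.start

lemma step_inr {I : TEVar 2 k h → Fin k} {q : B.Q} {r : Bool}
    (hq : B.label q = .inr r) : B.step I q = q := by
  unfold DBP.step; rw [hq]

lemma step_inl {I : TEVar 2 k h → Fin k} {q : B.Q} {v : TEVar 2 k h}
    (hq : B.label q = .inl v) : B.step I q = B.next q (I v) := by
  unfold DBP.step; rw [hq]

lemma trc_succ (I : TEVar 2 k h → Fin k) (t : ℕ) :
    trc B I (t + 1) = B.step I (trc B I t) := Function.iterate_succ_apply' _ _ _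

lemma trc_stable {I : TEVar 2 k h → Fin k} {n : ℕ} {r : Bool}
    (hq : B.label (trc B I n) = .inr r) : ∀ m, trc B I (n + m) = trc B I n
  | 0 => rfl
  | m + 1 => by
      rw [show n + (m + 1) = (n + m) + 1 by omega, trc_succ, trc_stable hq m, step_inr B hq]

variable (hcomp : B.Computes (BTfun 2 k hk h))

/-- A time at which the computation on `I` has reached the correct final state. -/
noncomputable def fT (I : TEVar 2 k h → Fin k) : ℕ := (hcomp I).choose

lemma fT_spec (I : TEVar 2 k h → Fin k) :
    B.label (trc B I (fT hk B hcomp I)) = .inr (BTfun 2 k hk h I) := (hcomp I).choose_spec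

lemma query_lt_fT {I : TEVar 2 k h → Fin k} {σ : ℕ} {v : TEVar 2 k h}
    (hq : B.label (trc B I σ) = .inl v) : σ < fT hk B hcomp I := by
  by_contra hcon
  have h1 : trc B I σ = trc B I (fT hk B hcomp I) := by
    rw [show σ = fT hk B hcomp I + (σ - fT hk B hcomp I) by omega]
    exact trc_stable B (fT_spec hk B hcomp I) _
  rw [h1, fT_spec hk B hcomp I] at hq
  exact absurd hq (by simp)

include hcomp in
lemma outputs_eq {I J : TEVar 2 k h → Fin k}
    (hagree : ∀ s, trc B J s = trc B I s) : BTfun 2 k hk h I = BTfun 2 k hk h J := by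
  set M := fT hk B hcomp I + fT hk B hcomp J with hM
  have hI : B.label (trc B I M) = .inr (BTfun 2 k hk h I) := by
    rw [hM, trc_stable B (fT_spec hk B hcomp I)]
    exact fT_spec hk B hcomp I
  have hJ : B.label (trc B J M) = .inr (BTfun 2 k hk h J) := by
    rw [hM, show fT hk B hcomp I + fT hk B hcomp J = fT hk B hcomp J + fT hk B hcomp I by omega,
      trc_stable B (fT_spec hk B hcomp J)]
    exact fT_spec hk B hcomp J
  rw [hagree M, hI] at hJ
  exact Sum.inr_injective hJ

lemma trc_agree {I J : TEVar 2 k h → Fin k} (s : ℕ)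
    (hyp : ∀ σ, σ < s → ∀ v, B.label (trc B I σ) = .inl v → J v = I v) :
    trc B J s = trc B I s := by
  induction s with
  | zero => rfl
  | succ n ih =>
      have hn : trc B J n = trc B I n := ih (fun σ hσ => hyp σ (by omega))
      rw [trc_succ, trc_succ, hn]
      cases hl : B.label (trc B I n) with
      | inl v => rw [step_inl B hl, step_inl B hl, hyp n (by omega) v hl]
      | inr r => rw [step_inr B hl, step_inr B hl]

/-- `I`'s computation queries the function of node `rd` at time `σ`. -/
def isQ (I : TEVar 2 k h → Fin k) (σ : ℕ) (rd : List (Fin 2)) : Prop :=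
  ∃ args hle, B.label (trc B I σ) = .inl (cellVar h rd args hle)

variable (hthr : DBPThrifty 2 k h hk B)

include hthr in
lemma query_args {I : TEVar 2 k h → Fin k} {σ : ℕ} {rd : List (Fin 2)}
    {args : Fin 2 → Fin k} {hle : rd.length + 2 ≤ h}
    (hq : B.label (trc B I σ) = .inl (cellVar h rd args hle)) :
    args = alphav hk h I rd hle :=
  thrifty_cell hk h I rd args hle (hthr I σ _ hq)

end TELB

namespace TELB

open Classical

section Modf

variable {k : ℕ}

/-- Rewire the input so that node `rd` takes value `e`, changing only `rd`'s own table
and one off-thrifty cell in each proper ancestor of `rd`. -/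
def modf (hk2 : 2 ≤ k) : (m : ℕ) → (TEVar 2 k m → Fin k) → (rd : List (Fin 2)) → Fin k →
    rd.length + 2 ≤ m → TEVar 2 k m → Fin k
  | m + 2, I, [], e, _ => fun v => match v with
      | .root _ => e
      | .child d x => I (.child d x)
  | m + 2, I, d :: rd, e, hle =>
      let w : Fin 2 → Fin k := fun i => rootValue 2 k (by omega) (m + 1) (restr I i)
      let Jd := modf hk2 (m + 1) (restr I d) rd (flipv hk2 (w d))
        (by simp only [List.length_cons] at hle; omega)
      fun v => match v with
      | .root args => if args = Function.update w d (flipv hk2 (w d)) then e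
          else I (.root args)
      | .child d' x => if d' = d then Jd x else I (.child d' x)
  | 0, _, _, _, hle => absurd hle (by omega)
  | 1, _, _, _, hle => absurd hle (by omega)

lemma modf_child (hk2 : 2 ≤ k) {m : ℕ} (I : TEVar 2 k (m + 2) → Fin k) (d : Fin 2)
    (rd : List (Fin 2)) (e : Fin k) (hle : (d :: rd).length + 2 ≤ m + 2) (j : Fin 2)
    (x : TEVar 2 k (m + 1)) :
    modf hk2 (m + 2) I (d :: rd) e hle (.child j x)
      = if j = d then modf hk2 (m + 1) (restr I d) rd
          (flipv hk2 (rootValue 2 k (by omega) (m + 1) (restr I d)))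
          (by simp only [List.length_cons] at hle; omega) x
        else I (.child j x) := by
  simp [modf]

lemma modf_root (hk2 : 2 ≤ k) {m : ℕ} (I : TEVar 2 k (m + 2) → Fin k) (d : Fin 2)
    (rd : List (Fin 2)) (e : Fin k) (hle : (d :: rd).length + 2 ≤ m + 2)
    (args : Fin 2 → Fin k) :
    modf hk2 (m + 2) I (d :: rd) e hle (.root args)
      = if args = Function.update (fun i => rootValue 2 k (by omega) (m + 1) (restr I i)) d
            (flipv hk2 (rootValue 2 k (by omega) (m + 1) (restr I d))) then e
        else I (.root args) := by
  simp [modf]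

lemma modf_nil_root (hk2 : 2 ≤ k) {m : ℕ} (I : TEVar 2 k (m + 2) → Fin k) (e : Fin k)
    (hle : ([] : List (Fin 2)).length + 2 ≤ m + 2) (args : Fin 2 → Fin k) :
    modf hk2 (m + 2) I [] e hle (.root args) = e := by
  simp [modf]

lemma modf_nil_child (hk2 : 2 ≤ k) {m : ℕ} (I : TEVar 2 k (m + 2) → Fin k) (e : Fin k)
    (hle : ([] : List (Fin 2)).length + 2 ≤ m + 2) (d : Fin 2) (x : TEVar 2 k (m + 1)) :
    modf hk2 (m + 2) I [] e hle (.child d x) = I (.child d x) := by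
  simp [modf]

lemma modf_rootValue (hk2 : 2 ≤ k) (hk : 0 < k) :
    ∀ (m : ℕ) (I : TEVar 2 k m → Fin k) (rd : List (Fin 2))
    (e : Fin k) (hle : rd.length + 2 ≤ m),
    rootValue 2 k hk m (modf hk2 m I rd e hle) = e
  | m + 2, I, [], e, hle => by
      rw [rootValue]
      exact modf_nil_root hk2 I e hle _
  | m + 2, I, d :: rd, e, hle => by
      rw [rootValue]
      rw [modf_root hk2 I d rd e hle]
      rw [if_pos]
      funext j
      by_cases hj : j = d
      · subst hj
        rw [Function.update_self]
        have hfn : (fun x => modf hk2 (m + 2) I (j :: rd) e hle (.child j x))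
            = modf hk2 (m + 1) (restr I j) rd
                (flipv hk2 (rootValue 2 k (by omega) (m + 1) (restr I j)))
                (by simp only [List.length_cons] at hle; omega) := by
          funext x
          rw [modf_child hk2 I j rd e hle j x, if_pos rfl]
        show rootValue 2 k hk (m + 1)
            (fun x => modf hk2 (m + 2) I (j :: rd) e hle (.child j x)) = _
        rw [hfn]
        exact modf_rootValue hk2 hk (m + 1) (restr I j) rd _ _
      · rw [Function.update_of_ne hj]
        have hfn : (fun x => modf hk2 (m + 2) I (d :: rd) e hle (.child j x))
            = restr I j := by
          funext x
          rw [modf_child hk2 I d rd e hle j x, if_neg hj]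
          rfl
        show rootValue 2 k hk (m + 1)
            (fun x => modf hk2 (m + 2) I (d :: rd) e hle (.child j x)) = _
        rw [hfn]

lemma modf_changes (hk2 : 2 ≤ k) (hk : 0 < k) :
    ∀ (m : ℕ) (I : TEVar 2 k m → Fin k) (rd : List (Fin 2))
    (e : Fin k) (hle : rd.length + 2 ≤ m) (v : TEVar 2 k m),
    modf hk2 m I rd e hle v ≠ I v →
    (∃ args hle', v = cellVar m rd args hle')
      ∨ (∃ rd' args hle', rd' <+: rd ∧ rd' ≠ rd ∧
          v = cellVar m rd' args hle' ∧ args ≠ alphav hk m I rd' hle')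
  | m + 2, I, [], e, hle, v, hch => by
      cases v with
      | root args =>
          exact Or.inl ⟨args, hle, rfl⟩
      | child d x =>
          exact absurd (modf_nil_child hk2 I e hle d x) hch
  | m + 2, I, d :: rd, e, hle, v, hch => by
      cases v with
      | root args =>
          rw [modf_root hk2 I d rd e hle] at hch
          by_cases hargs : args = Function.update
              (fun i => rootValue 2 k (by omega) (m + 1) (restr I i)) d
              (flipv hk2 (rootValue 2 k (by omega) (m + 1) (restr I d)))
          · refine Or.inr ⟨[], args, by simp only [List.length_nil]; omega,
              List.nil_prefix, by simp, rfl, ?_⟩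
            intro hcon
            have h1 : args d = flipv hk2 (rootValue 2 k hk (m + 1) (restr I d)) := by
              rw [hargs, Function.update_self]
            have h2 : args d = rootValue 2 k hk (m + 1) (restr I d) := by
              rw [hcon, alphav_nil]
              rfl
            rw [h2] at h1
            exact (flipv_ne hk2 _) h1.symm
          · rw [if_neg hargs] at hch
            exact absurd rfl hch
      | child d' x =>
          rw [modf_child hk2 I d rd e hle d' x] at hch
          by_cases hd : d' = d
          · subst hd
            rw [if_pos rfl] at hch
            rcases modf_changes hk2 hk (m + 1) (restr I d') rd _ _ x hch with
              ⟨args, hle', hx⟩ | ⟨rd', args, hle', hpre, hne', hx, hargs⟩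
            · refine Or.inl ⟨args, by simp only [List.length_cons]; omega, ?_⟩
              rw [cellVar]
              exact congrArg _ hx
            · refine Or.inr ⟨d' :: rd', args, by simp only [List.length_cons]; omega,
                List.cons_prefix_cons.mpr ⟨rfl, hpre⟩, by simp [hne'], ?_, ?_⟩
              · rw [cellVar]
                exact congrArg _ hx
              · rw [alphav_cons]
                exact hargs
          · rw [if_neg hd] at hch
            exact absurd rfl hch

end Modf

variable {k h : ℕ} (hk : 0 < k) (hk2 : 2 ≤ k) (B : DBP (TEVar 2 k h) k Bool)
variable (hcomp : B.Computes (BTfun 2 k hk h)) (hthr : DBPThrifty 2 k h hk B)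

include hthr hk2 in
/-- Thriftiness: any query to the function of node `rd`'s parent must come after a
query to the function of `rd` itself. -/
lemma child_query_before {I : TEVar 2 k h → Fin k} (rd : List (Fin 2)) (hne : rd ≠ [])
    (hle : rd.length + 2 ≤ h) (τ : ℕ) (hq : isQ B I τ rd.dropLast)
    (hno : ∀ σ, σ < τ → ¬ isQ B I σ rd) : False := by
  classical
  set c : TEVar 2 k h := cellVar h rd (alphav hk h I rd hle) hle with hc
  set J : TEVar 2 k h → Fin k := Function.update I c (flipv hk2 (I c)) with hJ
  have hJoff : ∀ v, v ≠ c → J v = I v := fun v hv => Function.update_of_ne hv _ _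
  have hJc : J c = flipv hk2 (I c) := Function.update_self _ _ _
  have hagree : ∀ s, s ≤ τ → trc B J s = trc B I s := by
    intro s hs
    apply trc_agree
    intro σ hσ v hlab
    by_cases hvc : v = c
    · exfalso
      exact hno σ (by omega) ⟨alphav hk h I rd hle, hle, by rwa [← hc, ← hvc]⟩
    · exact hJoff v hvc
  obtain ⟨pargs, ple, hlab⟩ := hq
  have hI : pargs = alphav hk h I rd.dropLast ple := query_args hk B hthr hlab
  have hlabJ : B.label (trc B J τ) = .inl (cellVar h rd.dropLast pargs ple) := by
    rw [hagree τ le_rfl]; exact hlab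
  have hJ' : pargs = alphav hk h J rd.dropLast ple := query_args hk B hthr hlabJ
  have haJ : alphav hk h J rd hle = alphav hk h I rd hle := by
    funext i
    apply valNode_congr
    intro v hv
    apply hJoff
    intro hvc
    rw [hvc, hc, varPath_cellVar] at hv
    have := hv.length_le
    simp at this
  have heval : valNode hk h I rd (by omega) = valNode hk h J rd (by omega) := by
    have h1 := congrFun (hI.symm.trans hJ') (rd.getLast hne)
    calc valNode hk h I rd _
        = valNode hk h I (rd.dropLast ++ [rd.getLast hne]) (by
            rw [List.dropLast_append_getLast hne]; omega) :=
          (valNode_path_congr hk (List.dropLast_append_getLast hne)).symm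
      _ = valNode hk h J (rd.dropLast ++ [rd.getLast hne]) (by
            rw [List.dropLast_append_getLast hne]; omega) := h1
      _ = valNode hk h J rd _ := valNode_path_congr hk (List.dropLast_append_getLast hne)
  have hIv : valNode hk h I rd (by omega) = I c := by rw [hc]; exact valNode_cell hk h I rd hle
  have hJv : valNode hk h J rd (by omega) = J c := by
    have h2 := valNode_cell hk h J rd hle
    rw [haJ, ← hc] at h2
    exact h2
  rw [hIv, hJv, hJc] at heval
  exact flipv_ne hk2 (I c) heval.symm

include hcomp hthr hk2 in
/-- On every input, the function of every internal node is queried at some point. -/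
lemma node_queried {I : TEVar 2 k h → Fin k} (rd : List (Fin 2)) (hle : rd.length + 2 ≤ h) :
    ∃ σ, isQ B I σ rd := by
  by_contra hno
  push_neg at hno
  have hagree : ∀ s, trc B (modf hk2 h I rd (flipv hk2 (rootValue 2 k hk h I)) hle) s
      = trc B I s := by
    intro s
    apply trc_agree
    intro σ hσ v hlab
    by_contra hch
    rcases modf_changes hk2 hk h I rd _ hle v hch with
      ⟨args, hle', hx⟩ | ⟨rd', args, hle', hpre, hne', hx, hargs⟩
    · exact hno σ ⟨args, hle', by rwa [← hx]⟩
    · exact hargs (query_args hk B hthr (by rwa [hx] at hlab))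
  have hout : BTfun 2 k hk h I
      = BTfun 2 k hk h (modf hk2 h I rd (flipv hk2 (rootValue 2 k hk h I)) hle) :=
    outputs_eq hk B hcomp hagree
  have hroot : rootValue 2 k hk h (modf hk2 h I rd (flipv hk2 (rootValue 2 k hk h I)) hle)
      = flipv hk2 (rootValue 2 k hk h I) := modf_rootValue hk2 hk h I rd _ hle
  unfold BTfun at hout
  rw [hroot, decide_eq_decide] at hout
  have hflip := flipv_zero_iff hk2 (rootValue 2 k hk h I)
  tauto

end TELB

namespace TELB

open Classical

variable {k h : ℕ} (hk : 0 < k) (hk2 : 2 ≤ k) (B : DBP (TEVar 2 k h) k Bool)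
variable (hcomp : B.Computes (BTfun 2 k hk h)) (hthr : DBPThrifty 2 k h hk B)

/-- The times at which `I`'s computation queries the function of node `rd`. -/
noncomputable def Qfin (I : TEVar 2 k h → Fin k) (rd : List (Fin 2)) : Finset ℕ :=
  (Finset.range (fT hk B hcomp I)).filter (fun σ => isQ B I σ rd)

lemma mem_Qfin {I : TEVar 2 k h → Fin k} {rd : List (Fin 2)} {σ : ℕ} :
    σ ∈ Qfin hk B hcomp I rd ↔ isQ B I σ rd := by
  unfold Qfin
  rw [Finset.mem_filter, Finset.mem_range]
  constructor
  · exact fun hx => hx.2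
  · intro hx
    refine ⟨?_, hx⟩
    obtain ⟨args, hle, hlab⟩ := hx
    exact query_lt_fT hk B hcomp hlab

lemma isQ_unique {I : TEVar 2 k h → Fin k} {σ : ℕ} {rd rd' : List (Fin 2)}
    (h1 : isQ B I σ rd) (h2 : isQ B I σ rd') : rd = rd' := by
  obtain ⟨a1, l1, hl1⟩ := h1
  obtain ⟨a2, l2, hl2⟩ := h2
  rw [hl1] at hl2
  exact (cellVar_inj (Sum.inl_injective hl2)).1

/-- The establishment time of node `rd`: the last query to `rd`'s function before the
establishment time of `rd`'s parent. -/
noncomputable def eT (I : TEVar 2 k h → Fin k) : List (Fin 2) → ℕ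
  | [] => if hs : (Qfin hk B hcomp I []).Nonempty then (Qfin hk B hcomp I []).max' hs else 0
  | d :: tl =>
      if hs : ((Qfin hk B hcomp I (d :: tl)).filter
          (fun σ => σ < eT I ((d :: tl).dropLast))).Nonempty
      then ((Qfin hk B hcomp I (d :: tl)).filter
          (fun σ => σ < eT I ((d :: tl).dropLast))).max' hs
      else 0
  termination_by rd => rd.length
  decreasing_by all_goals (simp only [List.length_dropLast, List.length_cons]; omega)

include hk2 hthr in
lemma eT_props {I : TEVar 2 k h → Fin k} : ∀ (n : ℕ) (rd : List (Fin 2)), rd.length = n →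
    rd.length + 2 ≤ h →
    isQ B I (eT hk B hcomp I rd) rd ∧
      (rd ≠ [] → eT hk B hcomp I rd < eT hk B hcomp I rd.dropLast) := by
  intro n
  induction n using Nat.strong_induction_on with
  | _ n ih =>
    intro rd hn hle
    cases rd with
    | nil =>
        obtain ⟨σ, hσ⟩ := node_queried hk hk2 B hcomp hthr ([] : List (Fin 2)) hle
        have hs : (Qfin hk B hcomp I []).Nonempty := ⟨σ, mem_Qfin hk B hcomp |>.mpr hσ⟩
        refine ⟨?_, fun hne => absurd rfl hne⟩
        rw [eT, dif_pos hs]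
        exact mem_Qfin hk B hcomp |>.mp (Finset.max'_mem _ hs)
    | cons d tl =>
        have hlep : (d :: tl).dropLast.length + 2 ≤ h := by
          simp only [List.length_dropLast, List.length_cons] at *
          omega
        have hdl : (d :: tl).dropLast.length = tl.length := by
          simp [List.length_dropLast]
        have hnn : tl.length + 1 = n := by simpa using hn
        have hpar : isQ B I (eT hk B hcomp I (d :: tl).dropLast) (d :: tl).dropLast :=
          (ih ((d :: tl).dropLast.length) (by omega) (d :: tl).dropLast rfl hlep).1
        have hex : ∃ σ, σ < eT hk B hcomp I (d :: tl).dropLast ∧ isQ B I σ (d :: tl) := by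
          by_contra hcon
          push_neg at hcon
          exact child_query_before hk hk2 B hthr (d :: tl) (by simp) hle _ hpar
            (fun σ hσ => hcon σ hσ)
        obtain ⟨σ, hσlt, hσq⟩ := hex
        have hs : ((Qfin hk B hcomp I (d :: tl)).filter
            (fun σ => σ < eT hk B hcomp I ((d :: tl).dropLast))).Nonempty := by
          exact ⟨σ, Finset.mem_filter.mpr ⟨mem_Qfin hk B hcomp |>.mpr hσq, hσlt⟩⟩
        have hmem := Finset.max'_mem _ hs
        rw [Finset.mem_filter] at hmem
        constructor
        · rw [eT, dif_pos hs]
          exact mem_Qfin hk B hcomp |>.mp hmem.1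
        · intro _
          rw [eT, dif_pos hs]
          exact hmem.2

lemma eT_max {I : TEVar 2 k h → Fin k} {rd : List (Fin 2)} {σ : ℕ} (hne : rd ≠ [])
    (hq : isQ B I σ rd) (hlt : σ < eT hk B hcomp I rd.dropLast) :
    σ ≤ eT hk B hcomp I rd := by
  match rd with
  | [] => exact absurd rfl hne
  | d :: tl =>
      have hmem : σ ∈ (Qfin hk B hcomp I (d :: tl)).filter
          (fun σ => σ < eT hk B hcomp I ((d :: tl).dropLast)) :=
        Finset.mem_filter.mpr ⟨mem_Qfin hk B hcomp |>.mpr hq, hlt⟩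
      rw [eT, dif_pos ⟨σ, hmem⟩]
      exact Finset.le_max' _ σ hmem

/-- Descend left from a node until the establishment time drops below `t`. -/
noncomputable def desc (I : TEVar 2 k h → Fin k) (t : ℕ) : ℕ → List (Fin 2) → List (Fin 2)
  | 0, y => y
  | fuel + 1, y => if eT hk B hcomp I y < t then y else desc I t fuel (y ++ [0])

lemma desc_spec (I : TEVar 2 k h → Fin k) (t L : ℕ) : ∀ (fuel : ℕ) (y : List (Fin 2)),
    y.length + fuel = L →
    (∀ z, y <+: z → z.length = L → eT hk B hcomp I z < t) →
    y <+: desc hk B hcomp I t fuel y ∧ (desc hk B hcomp I t fuel y).length ≤ L ∧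
      eT hk B hcomp I (desc hk B hcomp I t fuel y) < t ∧
      (desc hk B hcomp I t fuel y ≠ y →
        t ≤ eT hk B hcomp I (desc hk B hcomp I t fuel y).dropLast)
  | 0, y, hlen, hstop => by
      rw [desc]
      exact ⟨List.prefix_refl y, by omega, hstop y (List.prefix_refl y) (by omega),
        fun hne => absurd rfl hne⟩
  | fuel + 1, y, hlen, hstop => by
      by_cases hy : eT hk B hcomp I y < t
      · rw [desc, if_pos hy]
        exact ⟨List.prefix_refl y, by omega, hy, fun hne => absurd rfl hne⟩
      · have hEq : desc hk B hcomp I t (fuel + 1) y = desc hk B hcomp I t fuel (y ++ [0]) := by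
          rw [desc, if_neg hy]
        obtain ⟨hpre, hlen', hlt', hlast'⟩ := desc_spec I t L fuel (y ++ [0])
          (by simp at hlen ⊢; omega)
          (fun z hz hzL => hstop z (((y.prefix_append [0]).trans hz)) hzL)
        rw [hEq]
        refine ⟨(y.prefix_append [0]).trans hpre, hlen', hlt', ?_⟩
        intro _
        by_cases hcase : desc hk B hcomp I t fuel (y ++ [0]) = y ++ [0]
        · rw [hcase, List.dropLast_concat]
          omega
        · exact hlast' hcase

end TELB

namespace TELB

open Classical

/-- A critical configuration for input `I` at level `l`: a level-`l` node `p` queried at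
time `t`, together with `h - l` "pinned" nodes, each established before `t` and revealed
by a query to its parent at time `rho j ≥ t`, with no intervening query to the node. -/
structure Cfg {k h : ℕ} (hk : 0 < k) (B : DBP (TEVar 2 k h) k Bool) (l : ℕ)
    (I : TEVar 2 k h → Fin k) : Type where
  hl2 : 2 ≤ l
  hlh : l ≤ h
  p : List (Fin 2)
  hp : p.length + l = h
  t : ℕ
  hq : B.label ((B.step I)^[t] B.start)
      = .inl (cellVar h p (alphav hk h I p (by omega)) (by omega))
  Spar : Fin (h - l) → List (Fin 2)
  Sdir : Fin (h - l) → Fin 2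
  hSlen : ∀ j, (Spar j).length + 1 ≤ h - l
  hSnotp : ∀ j, ¬ (p <+: (Spar j ++ [Sdir j]))
  hSdist : ∀ j j', Spar j ++ [Sdir j] = Spar j' ++ [Sdir j'] → j = j'
  rho : Fin (h - l) → ℕ
  hrt : ∀ j, t ≤ rho j
  hrq : ∀ j, B.label ((B.step I)^[rho j] B.start)
      = .inl (cellVar h (Spar j) (alphav hk h I (Spar j)
          (by have := hSlen j; omega)) (by have := hSlen j; omega))
  hcut : ∀ j σ, t ≤ σ → σ < rho j → ∀ args hle,
      B.label ((B.step I)^[σ] B.start) ≠ .inl (cellVar h (Spar j ++ [Sdir j]) args hle)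

variable {k h : ℕ} (hk : 0 < k) (hk2 : 2 ≤ k) (B : DBP (TEVar 2 k h) k Bool)
variable (hcomp : B.Computes (BTfun 2 k hk h)) (hthr : DBPThrifty 2 k h hk B)

include hk2 hcomp hthr in
lemma cfg_exists (l : ℕ) (hl2 : 2 ≤ l) (hlh : l ≤ h) (I : TEVar 2 k h → Fin k) :
    Nonempty (Cfg hk B l I) := by
  classical
  set L := h - l with hL
  obtain ⟨fstar, hfstar⟩ :=
    Finite.exists_max (fun f : Fin L → Fin 2 => eT hk B hcomp I (List.ofFn f))
  set p := List.ofFn fstar with hpdef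
  have hplen : p.length = L := List.length_ofFn (f := fstar)
  have hpint : p.length + 2 ≤ h := by omega
  set t := eT hk B hcomp I p with htdef
  have htakei : ∀ (i : ℕ) (hi : i < p.length),
      p.take (i + 1) = p.take i ++ [p.get ⟨i, hi⟩] := by
    intro i hi
    rw [List.take_succ]
    congr 1
    rw [List.getElem?_eq_getElem hi]
    rfl
  have hfliptake : ∀ (i : ℕ) (hi : i < p.length),
      p.take i ++ [flipd (p.get ⟨i, hi⟩)] ≠ p.take (i + 1) := by
    intro i hi hcon
    rw [htakei i hi] at hcon
    simp only [List.append_cancel_left_eq, List.cons.injEq] at hcon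
    exact flipd_ne _ hcon.1
  have hmaxl : ∀ z : List (Fin 2), z.length = L → z ≠ p → eT hk B hcomp I z < t := by
    intro z hz hzp
    have hzint : z.length + 2 ≤ h := by omega
    obtain ⟨f, hf⟩ : ∃ f : Fin L → Fin 2, z = List.ofFn f := by
      refine ⟨fun r => z.get (Fin.cast hz.symm r), ?_⟩
      apply List.ext_get (by simp [hz])
      intro n h1 h2
      rw [List.get_ofFn]
      rfl
    have hle' : eT hk B hcomp I z ≤ t := by rw [hf]; exact hfstar f
    rcases lt_or_eq_of_le hle' with hlt | heq
    · exact hlt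
    · exfalso
      have h1 := (eT_props hk hk2 B hcomp hthr (I := I) z.length z rfl hzint).1
      have h2 := (eT_props hk hk2 B hcomp hthr (I := I) p.length p rfl hpint).1
      rw [heq] at h1
      exact hzp (isQ_unique B h1 h2)
  have hanc : ∀ m i : ℕ, i + m = L → t ≤ eT hk B hcomp I (p.take i) ∧
      (i < L → t < eT hk B hcomp I (p.take i)) := by
    intro m
    induction m with
    | zero =>
        intro i hi
        have hppp : p.take i = p := by
          rw [show i = p.length by omega]
          exact List.take_length (l := p)
        rw [hppp]
        exact ⟨le_rfl, by omega⟩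
    | succ m ihm =>
        intro i hi
        have hi1 := (ihm (i + 1) (by omega)).1
        have hgl : i < p.length := by omega
        have hne : p.take (i + 1) ≠ [] := by
          intro hcon
          have h0 := congrArg List.length hcon
          rw [List.length_take] at h0
          simp only [List.length_nil] at h0
          omega
        have hint1 : (p.take (i + 1)).length + 2 ≤ h := by
          rw [List.length_take]
          omega
        have hdrop : (p.take (i + 1)).dropLast = p.take i := by
          rw [htakei i hgl, List.dropLast_concat]
        have hlt := (eT_props hk hk2 B hcomp hthr (I := I) _ (p.take (i + 1)) rfl hint1).2 hne
        rw [hdrop] at hlt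
        exact ⟨by omega, fun _ => by omega⟩
  have key : ∀ i : Fin L, ∃ n : List (Fin 2), n ≠ [] ∧
      (p.take i.val ++ [flipd (p.get ⟨i.val, by omega⟩)]) <+: n ∧ n.length ≤ L ∧
      eT hk B hcomp I n < t ∧ t ≤ eT hk B hcomp I n.dropLast := by
    intro i
    have hiL : i.val < L := i.isLt
    have higet : i.val < p.length := by omega
    set si := p.take i.val ++ [flipd (p.get ⟨i.val, higet⟩)] with hsidef
    have hsilen : si.length = i.val + 1 := by
      rw [hsidef]
      simp [List.length_take]
      omega
    have hsne : si ≠ [] := by rw [hsidef]; simp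
    have hstop : ∀ z, si <+: z → z.length = L → eT hk B hcomp I z < t := by
      intro z hz hzL
      refine hmaxl z hzL ?_
      intro hzp
      rw [hzp] at hz
      have heqsi : si = p.take (i.val + 1) := by
        have h3 := List.prefix_iff_eq_take.mp hz
        rw [hsilen] at h3
        exact h3
      exact hfliptake i.val higet heqsi
    have hfuel : si.length + (L - (i.val + 1)) = L := by omega
    obtain ⟨hpre, hlen, hlt, hlast⟩ :=
      desc_spec hk B hcomp I t L (L - (i.val + 1)) si hfuel hstop
    refine ⟨desc hk B hcomp I t (L - (i.val + 1)) si, ?_, hpre, hlen, hlt, ?_⟩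
    · intro hcon
      rw [hcon] at hpre
      exact hsne (List.prefix_nil.mp hpre)
    · by_cases hcase : desc hk B hcomp I t (L - (i.val + 1)) si = si
      · rw [hcase, hsidef, List.dropLast_concat]
        exact le_of_lt ((hanc (L - i.val) i.val (by omega)).2 hiL)
      · exact hlast hcase
  choose nfun hnne hnpre hnlen hnlt hnpar using key
  have hrecon : ∀ j : Fin L, (nfun j).dropLast ++ [(nfun j).getLast (hnne j)] = nfun j :=
    fun j => List.dropLast_append_getLast (hnne j)
  have hsilen' : ∀ j : Fin L,
      (p.take j.val ++ [flipd (p.get ⟨j.val, by have := j.isLt; omega⟩)]).length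
        = j.val + 1 := by
    intro j
    simp [List.length_take]
    have := j.isLt
    omega
  have hnotp : ∀ j : Fin L, ¬ (p <+: nfun j) := by
    intro j hcon
    have hpre' := hnpre j
    have h1 : (p.take j.val ++ [flipd (p.get ⟨j.val, by have := j.isLt; omega⟩)]) <+: p :=
      List.prefix_of_prefix_length_le hpre' hcon (by
        rw [hsilen' j]
        have := j.isLt
        omega)
    have h2 := List.prefix_iff_eq_take.mp h1
    rw [hsilen' j] at h2
    exact hfliptake j.val (by have := j.isLt; omega) h2
  have hdistinct : ∀ j j' : Fin L, nfun j = nfun j' → j = j' := by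
    have haux : ∀ j j' : Fin L, j.val < j'.val → nfun j = nfun j' → False := by
      intro j j' hjj hcon
      have h1 : (p.take j.val ++ [flipd (p.get ⟨j.val, by have := j.isLt; omega⟩)])
          <+: (p.take j'.val ++ [flipd (p.get ⟨j'.val, by have := j'.isLt; omega⟩)]) := by
        refine List.prefix_of_prefix_length_le (hnpre j) (by rw [hcon]; exact hnpre j') ?_
        rw [hsilen' j, hsilen' j']
        omega
      have h2 := List.prefix_iff_eq_take.mp h1
      rw [hsilen' j] at h2
      rw [List.take_append_of_le_length (by rw [List.length_take]; have := j'.isLt; omega),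
        List.take_take] at h2
      rw [show min (j.val + 1) j'.val = j.val + 1 by omega] at h2
      exact hfliptake j.val (by have := j.isLt; omega) h2
    intro j j' hcon
    rcases lt_trichotomy j.val j'.val with hlt | heq | hgt
    · exact absurd hcon (fun hc => haux j j' hlt hc)
    · exact Fin.ext heq
    · exact absurd hcon.symm (fun hc => haux j' j hgt hc)
  have hnint : ∀ j : Fin L, (nfun j).length + 2 ≤ h := by
    intro j
    have := hnlen j
    omega
  have hdint : ∀ j : Fin L, (nfun j).dropLast.length + 2 ≤ h := by
    intro j
    rw [List.length_dropLast]
    have := hnlen j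
    omega
  -- t's query has thrifty arguments
  obtain ⟨pargs, pple, hplab⟩ := (eT_props hk hk2 B hcomp hthr (I := I) p.length p rfl hpint).1
  have hpargs := query_args hk B hthr hplab
  rw [hpargs] at hplab
  -- the reveal queries
  have hrhoq : ∀ j : Fin L, B.label ((B.step I)^[eT hk B hcomp I (nfun j).dropLast] B.start)
      = .inl (cellVar h (nfun j).dropLast
          (alphav hk h I (nfun j).dropLast (hdint j)) (hdint j)) := by
    intro j
    obtain ⟨aa, hla, hlab⟩ :=
      (eT_props hk hk2 B hcomp hthr (I := I) (nfun j).dropLast.length (nfun j).dropLast rfl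
        (hdint j)).1
    have := query_args hk B hthr hlab
    rw [this] at hlab
    exact hlab
  refine ⟨⟨hl2, hlh, p, by omega, t, hplab, fun j => (nfun j).dropLast,
    fun j => (nfun j).getLast (hnne j), ?_, ?_, ?_,
    fun j => eT hk B hcomp I (nfun j).dropLast, ?_, ?_, ?_⟩⟩
  · intro j
    rw [List.length_dropLast]
    have h1 := hnlen j
    have h2 := List.length_pos_iff.mpr (hnne j)
    omega
  · intro j
    rw [hrecon j]
    exact hnotp j
  · intro j j' hcon
    rw [hrecon j, hrecon j'] at hcon
    exact hdistinct j j' hcon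
  · intro j
    exact hnpar j
  · intro j
    exact hrhoq j
  · intro j σ hσt hσρ args hle hlab
    have hq' : isQ B I σ (nfun j) := by
      rw [← hrecon j]
      exact ⟨args, hle, hlab⟩
    have hmax := eT_max hk B hcomp (hnne j) hq' hσρ
    have := hnlt j
    omega

end TELB

namespace TELB

open Classical

variable {k h : ℕ}

lemma Cfg.nodeInt {hk : 0 < k} {B : DBP (TEVar 2 k h) k Bool} {l : ℕ}
    {I : TEVar 2 k h → Fin k} (c : Cfg hk B l I) (j : Fin (h - l)) :
    (c.Spar j ++ [c.Sdir j]).length + 2 ≤ h := by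
  have h1 := c.hSlen j
  have h2 := c.hl2
  have h3 := c.hlh
  simp only [List.length_append, List.length_cons, List.length_nil]
  omega

lemma Cfg.childLen {hk : 0 < k} {B : DBP (TEVar 2 k h) k Bool} {l : ℕ}
    {I : TEVar 2 k h → Fin k} (c : Cfg hk B l I) (i : Fin 2) :
    (c.p ++ [i]).length + 1 ≤ h := by
  have h1 := c.hp
  have h2 := c.hl2
  simp only [List.length_append, List.length_cons, List.length_nil]
  omega

variable (hk : 0 < k) (B : DBP (TEVar 2 k h) k Bool)

/-- The variable holding the value of node `y`: its thrifty cell if internal, or the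
leaf variable if `y` is a leaf. -/
noncomputable def valCell (I : TEVar 2 k h → Fin k) (y : List (Fin 2))
    (hy : y.length + 1 ≤ h) : TEVar 2 k h :=
  if hc : y.length + 2 ≤ h then cellVar h y (alphav hk h I y hc) hc
  else leafVar h y (by omega)

lemma valCell_val (I : TEVar 2 k h → Fin k) (y : List (Fin 2)) (hy : y.length + 1 ≤ h) :
    I (valCell hk I y hy) = valNode hk h I y hy := by
  unfold valCell
  split
  · exact (valNode_cell hk h I y _).symm
  · exact (valNode_leaf hk h I y (by omega)).symm

/-- The `h - l + 2` pinned cells of a configuration: the thrifty cells of the pinned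
nodes, and the value cells of the two children of `p`. -/
noncomputable def cfgCell {l : ℕ} {I : TEVar 2 k h → Fin k} (c : Cfg hk B l I) :
    (Fin (h - l) ⊕ Fin 2) → TEVar 2 k h
  | .inl j => cellVar h (c.Spar j ++ [c.Sdir j])
      (alphav hk h I (c.Spar j ++ [c.Sdir j]) (c.nodeInt j)) (c.nodeInt j)
  | .inr i => valCell hk I (c.p ++ [i]) (c.childLen i)

lemma cfgCell_node_len {l : ℕ} {I : TEVar 2 k h → Fin k} (c : Cfg hk B l I)
    (j : Fin (h - l)) : (c.Spar j ++ [c.Sdir j]).length ≤ h - l := by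
  have h1 := c.hSlen j
  simp only [List.length_append, List.length_cons, List.length_nil]
  omega

lemma cfgCell_inl {l : ℕ} {I : TEVar 2 k h → Fin k} (c : Cfg hk B l I) (j : Fin (h - l)) :
    cfgCell hk B c (.inl j) = cellVar h (c.Spar j ++ [c.Sdir j])
      (alphav hk h I (c.Spar j ++ [c.Sdir j]) (c.nodeInt j)) (c.nodeInt j) := rfl

lemma cfgCell_inr {l : ℕ} {I : TEVar 2 k h → Fin k} (c : Cfg hk B l I) (i : Fin 2) :
    cfgCell hk B c (.inr i) = valCell hk I (c.p ++ [i]) (c.childLen i) := rfl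

lemma cfgCell_inj {l : ℕ} {I : TEVar 2 k h → Fin k} (c : Cfg hk B l I) :
    Function.Injective (cfgCell hk B c) := by
  have hchildlen : ∀ i : Fin 2, (c.p ++ [i]).length = (h - l) + 1 := by
    intro i
    have h1 := c.hp
    have h2 := c.hl2
    have h3 := c.hlh
    simp only [List.length_append, List.length_cons, List.length_nil]
    omega
  have hcross : ∀ (j : Fin (h - l)) (i : Fin 2),
      cfgCell hk B c (.inl j) ≠ cfgCell hk B c (.inr i) := by
    intro j i hcon
    rw [cfgCell_inl, cfgCell_inr] at hcon
    unfold valCell at hcon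
    split at hcon
    · have h1 := congrArg List.length (cellVar_inj hcon).1
      rw [hchildlen i] at h1
      have h2 := cfgCell_node_len hk B c j
      omega
    · exact cellVar_ne_leafVar h _ _ _ _ _ hcon
  intro x y hxy
  cases x with
  | inl j =>
      cases y with
      | inl j' =>
          rw [cfgCell_inl, cfgCell_inl] at hxy
          exact congrArg Sum.inl (c.hSdist j j' (cellVar_inj hxy).1)
      | inr i => exact absurd hxy (hcross j i)
  | inr i =>
      cases y with
      | inl j => exact absurd hxy.symm (hcross j i)
      | inr i' =>
          have hii : (c.p ++ [i] : List (Fin 2)) = c.p ++ [i'] → i = i' := by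
            intro hcon
            have := List.append_cancel_left hcon
            simpa using this
          rw [cfgCell_inr, cfgCell_inr] at hxy
          unfold valCell at hxy
          split at hxy
          · split at hxy
            · exact congrArg Sum.inr (hii (cellVar_inj hxy).1)
            · have e1 := hchildlen i
              have e2 := hchildlen i'
              omega
          · split at hxy
            · have e1 := hchildlen i
              have e2 := hchildlen i'
              omega
            · exact congrArg Sum.inr (hii (leafVar_inj hxy))

/-- Overwrite the pinned cells of configuration `c` with the values `δ`. -/
noncomputable def psiF {l : ℕ} {I : TEVar 2 k h → Fin k} (c : Cfg hk B l I)
    (δ : (Fin (h - l) ⊕ Fin 2) → Fin k) : TEVar 2 k h → Fin k :=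
  fun v => if hv : ∃ x, cfgCell hk B c x = v then δ hv.choose else I v

lemma psiF_cell {l : ℕ} {I : TEVar 2 k h → Fin k} (c : Cfg hk B l I)
    (δ : (Fin (h - l) ⊕ Fin 2) → Fin k) (x : Fin (h - l) ⊕ Fin 2) :
    psiF hk B c δ (cfgCell hk B c x) = δ x := by
  unfold psiF
  rw [dif_pos ⟨x, rfl⟩]
  congr 1
  exact cfgCell_inj hk B c (⟨x, rfl⟩ : ∃ y, cfgCell hk B c y = cfgCell hk B c x).choose_spec

lemma psiF_off {l : ℕ} {I : TEVar 2 k h → Fin k} {c : Cfg hk B l I}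
    {δ : (Fin (h - l) ⊕ Fin 2) → Fin k} {v : TEVar 2 k h}
    (hv : ∀ x, cfgCell hk B c x ≠ v) : psiF hk B c δ v = I v := by
  unfold psiF
  rw [dif_neg]
  push_neg
  exact hv

end TELB

namespace TELB

open Classical

lemma alphav_path_congr {k : ℕ} (hk : 0 < k) {m : ℕ} {I : TEVar 2 k m → Fin k}
    {rd rd' : List (Fin 2)} {hle : rd.length + 2 ≤ m} (hrd : rd = rd') :
    alphav hk m I rd hle = alphav hk m I rd' (hrd ▸ hle) := by subst hrd; rfl

variable {k h : ℕ} (hk : 0 < k) (B : DBP (TEVar 2 k h) k Bool)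
variable (hthr : DBPThrifty 2 k h hk B)

include hthr in
lemma core_inj {l : ℕ} {I I' : TEVar 2 k h → Fin k}
    (c : Cfg hk B l I) (c' : Cfg hk B l I')
    {δ δ' : (Fin (h - l) ⊕ Fin 2) → Fin k}
    (hqeq : (B.step I)^[c.t] B.start = (B.step I')^[c'.t] B.start)
    (hpsi : psiF hk B c δ = psiF hk B c' δ') : I = I' := by
  classical
  have hcpint : c.p.length + 2 ≤ h := by have := c.hp; have := c.hl2; omega
  have hcpint' : c'.p.length + 2 ≤ h := by have := c'.hp; have := c'.hl2; omega
  -- step 0 : the two labels at the critical states agree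
  have hlabs : (Sum.inl (cellVar h c.p (alphav hk h I c.p hcpint) hcpint) :
      TEVar 2 k h ⊕ Bool) = .inl (cellVar h c'.p (alphav hk h I' c'.p hcpint') hcpint') := by
    rw [← c.hq, ← c'.hq, hqeq]
  have hcells := Sum.inl_injective hlabs
  have hpp : c.p = c'.p := (cellVar_inj hcells).1
  have halpha : alphav hk h I c.p hcpint = alphav hk h I' c'.p hcpint' :=
    (cellVar_inj hcells).2
  have halpha' : alphav hk h I c.p hcpint = alphav hk h I' c.p hcpint := by
    rw [halpha]
    exact (alphav_path_congr hk hpp).symm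
  have hchild : ∀ i : Fin 2,
      valNode hk h I (c.p ++ [i]) (by simp; omega)
      = valNode hk h I' (c.p ++ [i]) (by simp; omega) :=
    fun i => congrFun halpha' i
  have hchild' : ∀ i : Fin 2,
      valNode hk h I (c'.p ++ [i]) (by simp; omega)
      = valNode hk h I' (c'.p ++ [i]) (by simp; omega) := by
    intro i
    calc valNode hk h I (c'.p ++ [i]) _
        = valNode hk h I (c.p ++ [i]) (by simp; omega) :=
          valNode_path_congr hk (by rw [hpp])
      _ = valNode hk h I' (c.p ++ [i]) (by simp; omega) := hchild i
      _ = valNode hk h I' (c'.p ++ [i]) _ := valNode_path_congr hk (by rw [hpp])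
  -- agreement off the pinned cells
  have hDlem : ∀ v, (∀ x, cfgCell hk B c x ≠ v) → (∀ x, cfgCell hk B c' x ≠ v) →
      I v = I' v := by
    intro v h1 h2
    have h3 := congrFun hpsi v
    rwa [psiF_off hk B h1, psiF_off hk B h2] at h3
  -- pin extraction
  have pinA : ∀ j : Fin (h - l),
      ((B.step I')^[c'.t + (c.rho j - c.t)] B.start = (B.step I)^[c.rho j] B.start) →
      valNode hk h I (c.Spar j ++ [c.Sdir j]) (by have := c.nodeInt j; omega)
        = valNode hk h I' (c.Spar j ++ [c.Sdir j]) (by have := c.nodeInt j; omega) := by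
    intro j hag
    have hlabI' : B.label ((B.step I')^[c'.t + (c.rho j - c.t)] B.start)
        = .inl (cellVar h (c.Spar j) (alphav hk h I (c.Spar j)
            (by have := c.hSlen j; have := c.hl2; have := c.hlh; omega))
          (by have := c.hSlen j; have := c.hl2; have := c.hlh; omega)) := by
      rw [hag]; exact c.hrq j
    have halj := thrifty_cell hk h I' (c.Spar j) _ _ (hthr I' _ _ hlabI')
    exact congrFun halj (c.Sdir j)
  have pinB : ∀ j : Fin (h - l),
      ((B.step I)^[c.t + (c'.rho j - c'.t)] B.start = (B.step I')^[c'.rho j] B.start) →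
      valNode hk h I (c'.Spar j ++ [c'.Sdir j]) (by have := c'.nodeInt j; omega)
        = valNode hk h I' (c'.Spar j ++ [c'.Sdir j]) (by have := c'.nodeInt j; omega) := by
    intro j hag
    have hlabI : B.label ((B.step I)^[c.t + (c'.rho j - c'.t)] B.start)
        = .inl (cellVar h (c'.Spar j) (alphav hk h I' (c'.Spar j)
            (by have := c'.hSlen j; have := c'.hl2; have := c'.hlh; omega))
          (by have := c'.hSlen j; have := c'.hl2; have := c'.hlh; omega)) := by
      rw [hag]; exact c'.hrq j
    have halj := thrifty_cell hk h I (c'.Spar j) _ _ (hthr I _ _ hlabI)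
    exact (congrFun halj (c'.Sdir j)).symm
  -- the two futures never diverge
  have hcteq : ∀ s, (B.step I)^[c.t + s] B.start = (B.step I')^[c'.t + s] B.start := by
    intro s
    induction s using Nat.strong_induction_on with
    | _ s ih =>
      cases s with
      | zero => simpa using hqeq
      | succ s =>
        have hs : (B.step I)^[c.t + s] B.start = (B.step I')^[c'.t + s] B.start :=
          ih s (by omega)
        rw [show c.t + (s + 1) = (c.t + s) + 1 by omega, Function.iterate_succ_apply',
          show c'.t + (s + 1) = (c'.t + s) + 1 by omega, Function.iterate_succ_apply', ← hs]
        cases hl : B.label ((B.step I)^[c.t + s] B.start) with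
        | inr r => rw [step_inr B hl, step_inr B hl]
        | inl v =>
          rw [step_inl B hl, step_inl B hl]
          have hlab' : B.label ((B.step I')^[c'.t + s] B.start) = .inl v := by
            rw [← hs]; exact hl
          congr 1
          -- show I v = I' v
          by_cases hin : ∃ x, cfgCell hk B c x = v
          · obtain ⟨x, hx⟩ := hin
            cases x with
            | inr i =>
              have hIv1 : I v = valNode hk h I (c.p ++ [i]) (c.childLen i) := by
                rw [← hx, cfgCell_inr]
                exact valCell_val hk I _ _
              have hIv2 : I' v = valNode hk h I' (c.p ++ [i]) (c.childLen i) := by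
                rw [← hx, cfgCell_inr] at hlab' ⊢
                unfold valCell at hlab' ⊢
                by_cases hcint : (c.p ++ [i]).length + 2 ≤ h
                · rw [dif_pos hcint] at hlab' ⊢
                  have hargs := thrifty_cell hk h I' (c.p ++ [i]) _ hcint (hthr I' _ _ hlab')
                  rw [hargs]
                  exact (valNode_cell hk h I' _ hcint).symm
                · rw [dif_neg hcint] at hlab' ⊢
                  exact (valNode_leaf hk h I' _ _).symm
              rw [hIv1, hIv2]
              exact hchild i
            | inl j =>
              have hIv1 : I v = valNode hk h I (c.Spar j ++ [c.Sdir j])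
                  (by have := c.nodeInt j; omega) := by
                rw [← hx, cfgCell_inl]
                exact (valNode_cell hk h I _ (c.nodeInt j)).symm
              have hrhole : c.rho j ≤ c.t + s := by
                by_contra hcon
                push_neg at hcon
                exact c.hcut j (c.t + s) (by omega) hcon
                  (alphav hk h I (c.Spar j ++ [c.Sdir j]) (c.nodeInt j)) (c.nodeInt j)
                  (by rw [← hx, cfgCell_inl] at hl; exact hl)
              have hrhone : c.rho j ≠ c.t + s := by
                intro hcon
                have h1 := c.hrq j
                rw [hcon] at h1
                rw [← hx, cfgCell_inl] at hl
                rw [hl] at h1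
                have h2 := (cellVar_inj (Sum.inl_injective h1)).1
                have h3 := congrArg List.length h2
                simp only [List.length_append, List.length_cons, List.length_nil] at h3
                omega
              have hpin := pinA j (by
                have h4 := ih (c.rho j - c.t) (by have := c.hrt j; omega)
                rw [show c.t + (c.rho j - c.t) = c.rho j from by have := c.hrt j; omega] at h4
                exact h4.symm)
              have hIv2 : I' v = valNode hk h I' (c.Spar j ++ [c.Sdir j])
                  (by have := c.nodeInt j; omega) := by
                rw [← hx, cfgCell_inl] at hlab' ⊢
                have hargs := thrifty_cell hk h I' _ _ (c.nodeInt j) (hthr I' _ _ hlab')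
                rw [hargs]
                exact (valNode_cell hk h I' _ (c.nodeInt j)).symm
              rw [hIv1, hIv2]
              exact hpin
          · by_cases hin' : ∃ x, cfgCell hk B c' x = v
            · obtain ⟨x, hx⟩ := hin'
              cases x with
              | inr i =>
                have hIv2 : I' v = valNode hk h I' (c'.p ++ [i]) (c'.childLen i) := by
                  rw [← hx, cfgCell_inr]
                  exact valCell_val hk I' _ _
                have hIv1 : I v = valNode hk h I (c'.p ++ [i]) (c'.childLen i) := by
                  rw [← hx, cfgCell_inr] at hl ⊢
                  unfold valCell at hl ⊢
                  by_cases hcint : (c'.p ++ [i]).length + 2 ≤ h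
                  · rw [dif_pos hcint] at hl ⊢
                    have hargs := thrifty_cell hk h I (c'.p ++ [i]) _ hcint (hthr I _ _ hl)
                    rw [hargs]
                    exact (valNode_cell hk h I _ hcint).symm
                  · rw [dif_neg hcint] at hl ⊢
                    exact (valNode_leaf hk h I _ _).symm
                rw [hIv1, hIv2]
                exact hchild' i
              | inl j =>
                have hIv2 : I' v = valNode hk h I' (c'.Spar j ++ [c'.Sdir j])
                    (by have := c'.nodeInt j; omega) := by
                  rw [← hx, cfgCell_inl]
                  exact (valNode_cell hk h I' _ (c'.nodeInt j)).symm
                have hrhole : c'.rho j ≤ c'.t + s := by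
                  by_contra hcon
                  push_neg at hcon
                  exact c'.hcut j (c'.t + s) (by omega) hcon
                    (alphav hk h I' (c'.Spar j ++ [c'.Sdir j]) (c'.nodeInt j)) (c'.nodeInt j)
                    (by rw [← hx, cfgCell_inl] at hlab'; exact hlab')
                have hrhone : c'.rho j ≠ c'.t + s := by
                  intro hcon
                  have h1 := c'.hrq j
                  rw [hcon] at h1
                  rw [← hx, cfgCell_inl] at hlab'
                  rw [hlab'] at h1
                  have h2 := (cellVar_inj (Sum.inl_injective h1)).1
                  have h3 := congrArg List.length h2
                  simp only [List.length_append, List.length_cons, List.length_nil] at h3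
                  omega
                have hpin := pinB j (by
                  have h4 := ih (c'.rho j - c'.t) (by have := c'.hrt j; omega)
                  rw [show c'.t + (c'.rho j - c'.t) = c'.rho j from by
                    have := c'.hrt j; omega] at h4
                  exact h4)
                have hIv1 : I v = valNode hk h I (c'.Spar j ++ [c'.Sdir j])
                    (by have := c'.nodeInt j; omega) := by
                  rw [← hx, cfgCell_inl] at hl ⊢
                  have hargs := thrifty_cell hk h I _ _ (c'.nodeInt j) (hthr I _ _ hl)
                  rw [hargs]
                  exact (valNode_cell hk h I _ (c'.nodeInt j)).symm
                rw [hIv1, hIv2]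
                exact hpin
            · push_neg at hin hin'
              exact hDlem v hin hin'
  -- all node values agree
  have hvA : ∀ (n : ℕ) (y : List (Fin 2)) (hy : y.length + 1 + n = h),
      valNode hk h I y (by omega) = valNode hk h I' y (by omega) := by
    intro n
    induction n with
    | zero =>
      intro y hy
      have hyne : ¬ (y.length + 2 ≤ h) := by omega
      by_cases hin : ∃ x, cfgCell hk B c x = leafVar h y (by omega)
      · obtain ⟨x, hx⟩ := hin
        cases x with
        | inl j =>
          exfalso
          rw [cfgCell_inl] at hx
          exact cellVar_ne_leafVar h _ _ _ _ _ hx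
        | inr i =>
          rw [cfgCell_inr] at hx
          unfold valCell at hx
          split at hx
          · exact absurd hx (cellVar_ne_leafVar h _ _ _ _ _)
          · have hy' := leafVar_inj hx
            calc valNode hk h I y _
                = valNode hk h I (c.p ++ [i]) (by rw [hy']; omega) :=
                  valNode_path_congr hk hy'.symm
              _ = valNode hk h I' (c.p ++ [i]) _ := hchild i
              _ = valNode hk h I' y _ := valNode_path_congr hk hy'
      · by_cases hin' : ∃ x, cfgCell hk B c' x = leafVar h y (by omega)
        · obtain ⟨x, hx⟩ := hin'
          cases x with
          | inl j =>
            exfalso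
            rw [cfgCell_inl] at hx
            exact cellVar_ne_leafVar h _ _ _ _ _ hx
          | inr i =>
            rw [cfgCell_inr] at hx
            unfold valCell at hx
            split at hx
            · exact absurd hx (cellVar_ne_leafVar h _ _ _ _ _)
            · have hy' := leafVar_inj hx
              calc valNode hk h I y _
                  = valNode hk h I (c'.p ++ [i]) (by rw [hy']; omega) :=
                    valNode_path_congr hk hy'.symm
                _ = valNode hk h I' (c'.p ++ [i]) _ := hchild' i
                _ = valNode hk h I' y _ := valNode_path_congr hk hy'
        · push_neg at hin hin'
          have hvv := hDlem _ hin hin'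
          calc valNode hk h I y (by omega)
              = I (leafVar h y (by omega)) := valNode_leaf hk h I y (by omega)
            _ = I' (leafVar h y (by omega)) := hvv
            _ = valNode hk h I' y (by omega) := (valNode_leaf hk h I' y (by omega)).symm
    | succ n ihn =>
      intro y hy
      have hyint : y.length + 2 ≤ h := by omega
      have halr : alphav hk h I y hyint = alphav hk h I' y hyint := by
        funext i
        exact ihn (y ++ [i]) (by simp; omega)
      by_cases hin : ∃ x, cfgCell hk B c x = cellVar h y (alphav hk h I y hyint) hyint
      · obtain ⟨x, hx⟩ := hin
        cases x with
        | inl j =>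
          have hyj : c.Spar j ++ [c.Sdir j] = y := by
            rw [cfgCell_inl] at hx
            exact (cellVar_inj hx).1
          have hpin := pinA j (by
            have h4 := hcteq (c.rho j - c.t)
            rw [show c.t + (c.rho j - c.t) = c.rho j from by have := c.hrt j; omega] at h4
            exact h4.symm)
          calc valNode hk h I y _
              = valNode hk h I (c.Spar j ++ [c.Sdir j]) (by rw [hyj]; omega) :=
                valNode_path_congr hk hyj.symm
            _ = valNode hk h I' (c.Spar j ++ [c.Sdir j]) _ := hpin
            _ = valNode hk h I' y _ := valNode_path_congr hk hyj
        | inr i =>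
          rw [cfgCell_inr] at hx
          unfold valCell at hx
          split at hx
          · have hy' := (cellVar_inj hx).1
            calc valNode hk h I y _
                = valNode hk h I (c.p ++ [i]) (by rw [hy']; omega) :=
                  valNode_path_congr hk hy'.symm
              _ = valNode hk h I' (c.p ++ [i]) _ := hchild i
              _ = valNode hk h I' y _ := valNode_path_congr hk hy'
          · exact absurd hx.symm (cellVar_ne_leafVar h _ _ _ _ _)
      · by_cases hin' : ∃ x, cfgCell hk B c' x = cellVar h y (alphav hk h I y hyint) hyint
        · obtain ⟨x, hx⟩ := hin'
          cases x with
          | inl j =>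
            have hyj : c'.Spar j ++ [c'.Sdir j] = y := by
              rw [cfgCell_inl] at hx
              exact (cellVar_inj hx).1
            have hpin := pinB j (by
              have h4 := hcteq (c'.rho j - c'.t)
              rw [show c'.t + (c'.rho j - c'.t) = c'.rho j from by
                have := c'.hrt j; omega] at h4
              exact h4)
            calc valNode hk h I y _
                = valNode hk h I (c'.Spar j ++ [c'.Sdir j]) (by rw [hyj]; omega) :=
                  valNode_path_congr hk hyj.symm
              _ = valNode hk h I' (c'.Spar j ++ [c'.Sdir j]) _ := hpin
              _ = valNode hk h I' y _ := valNode_path_congr hk hyj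
          | inr i =>
            rw [cfgCell_inr] at hx
            unfold valCell at hx
            split at hx
            · have hy' := (cellVar_inj hx).1
              calc valNode hk h I y _
                  = valNode hk h I (c'.p ++ [i]) (by rw [hy']; omega) :=
                    valNode_path_congr hk hy'.symm
                _ = valNode hk h I' (c'.p ++ [i]) _ := hchild' i
                _ = valNode hk h I' y _ := valNode_path_congr hk hy'
            · exact absurd hx.symm (cellVar_ne_leafVar h _ _ _ _ _)
        · push_neg at hin hin'
          have hvv := hDlem _ hin hin'
          calc valNode hk h I y (by omega)
              = I (cellVar h y (alphav hk h I y hyint) hyint) := valNode_cell hk h I y hyint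
            _ = I' (cellVar h y (alphav hk h I y hyint) hyint) := hvv
            _ = I' (cellVar h y (alphav hk h I' y hyint) hyint) := by rw [halr]
            _ = valNode hk h I' y (by omega) := (valNode_cell hk h I' y hyint).symm
  have vAg : ∀ (y : List (Fin 2)) (hy : y.length + 1 ≤ h),
      valNode hk h I y hy = valNode hk h I' y hy := by
    intro y hy
    exact hvA (h - (y.length + 1)) y (by omega)
  -- conclude that the inputs are equal
  funext v
  by_cases hin : ∃ x, cfgCell hk B c x = v
  · obtain ⟨x, hx⟩ := hin
    cases x with
    | inl j =>
      have halj : alphav hk h I (c.Spar j ++ [c.Sdir j]) (c.nodeInt j)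
          = alphav hk h I' (c.Spar j ++ [c.Sdir j]) (c.nodeInt j) := by
        funext i
        exact vAg _ (by have := c.nodeInt j; simp only [List.length_append,
          List.length_cons, List.length_nil] at *; omega)
      calc I v = valNode hk h I (c.Spar j ++ [c.Sdir j]) (by have := c.nodeInt j; omega) := by
            rw [← hx, cfgCell_inl]
            exact (valNode_cell hk h I _ (c.nodeInt j)).symm
        _ = valNode hk h I' (c.Spar j ++ [c.Sdir j]) (by have := c.nodeInt j; omega) :=
            vAg _ _
        _ = I' v := by
            rw [← hx, cfgCell_inl, halj]
            exact valNode_cell hk h I' _ (c.nodeInt j)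
    | inr i =>
      calc I v = valNode hk h I (c.p ++ [i]) (c.childLen i) := by
            rw [← hx, cfgCell_inr]
            exact valCell_val hk I _ _
        _ = valNode hk h I' (c.p ++ [i]) (c.childLen i) := vAg _ _
        _ = I' v := by
            rw [← hx, cfgCell_inr]
            unfold valCell
            by_cases hcint : (c.p ++ [i]).length + 2 ≤ h
            · rw [dif_pos hcint]
              have halr : alphav hk h I (c.p ++ [i]) hcint
                  = alphav hk h I' (c.p ++ [i]) hcint := by
                funext i'
                exact vAg _ (by simp at *; omega)
              rw [halr]
              exact valNode_cell hk h I' _ hcint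
            · rw [dif_neg hcint]
              exact valNode_leaf hk h I' _ _
  · by_cases hin' : ∃ x, cfgCell hk B c' x = v
    · obtain ⟨x, hx⟩ := hin'
      cases x with
      | inl j =>
        have halj : alphav hk h I' (c'.Spar j ++ [c'.Sdir j]) (c'.nodeInt j)
            = alphav hk h I (c'.Spar j ++ [c'.Sdir j]) (c'.nodeInt j) := by
          funext i
          exact (vAg _ (by have := c'.nodeInt j; simp only [List.length_append,
            List.length_cons, List.length_nil] at *; omega)).symm
        calc I v = valNode hk h I (c'.Spar j ++ [c'.Sdir j])
              (by have := c'.nodeInt j; omega) := by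
              rw [← hx, cfgCell_inl, halj]
              exact (valNode_cell hk h I _ (c'.nodeInt j)).symm
          _ = valNode hk h I' (c'.Spar j ++ [c'.Sdir j]) (by have := c'.nodeInt j; omega) :=
              vAg _ _
          _ = I' v := by
              rw [← hx, cfgCell_inl]
              exact valNode_cell hk h I' _ (c'.nodeInt j)
      | inr i =>
        calc I v = valNode hk h I (c'.p ++ [i]) (c'.childLen i) := by
              rw [← hx, cfgCell_inr]
              unfold valCell
              by_cases hcint : (c'.p ++ [i]).length + 2 ≤ h
              · rw [dif_pos hcint]
                have halr : alphav hk h I' (c'.p ++ [i]) hcint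
                    = alphav hk h I (c'.p ++ [i]) hcint := by
                  funext i'
                  exact (vAg _ (by simp at *; omega)).symm
                rw [halr]
                exact (valNode_cell hk h I _ hcint).symm
              · rw [dif_neg hcint]
                exact (valNode_leaf hk h I _ _).symm
          _ = valNode hk h I' (c'.p ++ [i]) (c'.childLen i) := vAg _ _
          _ = I' v := by
              rw [← hx, cfgCell_inr]
              exact (valCell_val hk I' _ _).symm
    · push_neg at hin hin'
      exact hDlem v hin hin'

end TELB

namespace TELB

open Classical

variable {k h : ℕ} (hk : 0 < k) (hk2 : 2 ≤ k) (B : DBP (TEVar 2 k h) k Bool)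
variable (hcomp : B.Computes (BTfun 2 k hk h)) (hthr : DBPThrifty 2 k h hk B)

/-- The canonical critical configuration of an input. -/
noncomputable def cfgOf (l : ℕ) (hl2 : 2 ≤ l) (hlh : l ≤ h) (I : TEVar 2 k h → Fin k) :
    Cfg hk B l I :=
  (cfg_exists hk hk2 B hcomp hthr l hl2 hlh I).some

/-- The set of states that query the function of a height-`l` node. -/
noncomputable def Slset (l : ℕ) : Finset B.Q :=
  letI := B.fin
  @Finset.filter _
    (fun q => ∃ v : TEVar 2 k h, B.label q = .inl v ∧ (varPath v).length + l = h)
    (Classical.decPred _) Finset.univ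

lemma Slset_disj (l l' : ℕ) (hne : l ≠ l') : Disjoint (Slset B l) (Slset B l') := by
  rw [Finset.disjoint_left]
  intro q h1 h2
  unfold Slset at h1 h2
  rw [Finset.mem_filter] at h1 h2
  obtain ⟨v, hv, hvl⟩ := h1.2
  obtain ⟨v', hv', hvl'⟩ := h2.2
  rw [hv] at hv'
  have hvv := Sum.inl_injective hv'
  subst hvv
  omega

include hk2 hcomp hthr in
lemma count_level (l : ℕ) (hl2 : 2 ≤ l) (hlh : l ≤ h) :
    k ^ (h - l + 2) ≤ (Slset B l).card := by
  classical
  letI := B.fin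
  haveI : Finite (TEVar 2 k h) := tevar_finite h
  haveI : Fintype (TEVar 2 k h) := Fintype.ofFinite _
  haveI : Nonempty (Fin k) := ⟨⟨0, hk⟩⟩
  have hFinj : Function.Injective
      (fun Iδ : (TEVar 2 k h → Fin k) × ((Fin (h - l) ⊕ Fin 2) → Fin k) =>
        (((B.step Iδ.1)^[(cfgOf hk hk2 B hcomp hthr l hl2 hlh Iδ.1).t] B.start,
          psiF hk B (cfgOf hk hk2 B hcomp hthr l hl2 hlh Iδ.1) Iδ.2) :
          B.Q × (TEVar 2 k h → Fin k))) := by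
    rintro ⟨I, δ⟩ ⟨I', δ'⟩ hIJ
    simp only [Prod.mk.injEq] at hIJ
    obtain ⟨hq, hψ⟩ := hIJ
    have hII : I = I' := core_inj hk B hthr
      (cfgOf hk hk2 B hcomp hthr l hl2 hlh I) (cfgOf hk hk2 B hcomp hthr l hl2 hlh I') hq hψ
    subst hII
    have hδ : δ = δ' := by
      funext x
      have h1 := congrFun hψ (cfgCell hk B (cfgOf hk hk2 B hcomp hthr l hl2 hlh I) x)
      rwa [psiF_cell, psiF_cell] at h1
    rw [hδ]
  have hmaps : ∀ Iδ : (TEVar 2 k h → Fin k) × ((Fin (h - l) ⊕ Fin 2) → Fin k),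
      (((B.step Iδ.1)^[(cfgOf hk hk2 B hcomp hthr l hl2 hlh Iδ.1).t] B.start,
        psiF hk B (cfgOf hk hk2 B hcomp hthr l hl2 hlh Iδ.1) Iδ.2) :
        B.Q × (TEVar 2 k h → Fin k)) ∈ (Slset B l) ×ˢ (Finset.univ) := by
    intro Iδ
    rw [Finset.mem_product]
    refine ⟨?_, Finset.mem_univ _⟩
    unfold Slset
    refine (@Finset.mem_filter _ _ (Classical.decPred _) _ _).mpr ⟨Finset.mem_univ _, ?_⟩
    refine ⟨_, (cfgOf hk hk2 B hcomp hthr l hl2 hlh Iδ.1).hq, ?_⟩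
    rw [varPath_cellVar]
    exact (cfgOf hk hk2 B hcomp hthr l hl2 hlh Iδ.1).hp
  have hcard := Finset.card_le_card_of_injOn
    (s := (Finset.univ : Finset ((TEVar 2 k h → Fin k) × ((Fin (h - l) ⊕ Fin 2) → Fin k))))
    (t := (Slset B l) ×ˢ (Finset.univ)) _ (fun a _ => hmaps a) hFinj.injOn
  rw [Finset.card_univ, Fintype.card_prod, Finset.card_product, Finset.card_univ] at hcard
  have hΔ : Fintype.card ((Fin (h - l) ⊕ Fin 2) → Fin k) = k ^ (h - l + 2) := by
    rw [Fintype.card_fun]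
    simp [Fintype.card_sum, Fintype.card_fin]
  have hpos : 0 < Fintype.card (TEVar 2 k h → Fin k) := Fintype.card_pos
  rw [mul_comm] at hcard
  have hfin := Nat.le_of_mul_le_mul_right hcard hpos
  rwa [hΔ] at hfin

end TELB


/-- For all `h, k ≥ 2`, every deterministic thrifty `k`-way branching program solving
`BT_2^h(k)` has at least `k^h` states; moreover it has at least `∑_{l=2}^{h} k^l`
states. -/
theorem det_thrifty_lower (h k : ℕ) (hh : 2 ≤ h) (hk : 2 ≤ k) :
    ∀ B : DBP (TEVar 2 k h) k Bool,
      B.Computes (BTfun 2 k (by omega) h) →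
      DBPThrifty 2 k h (by omega) B →
      k ^ h ≤ B.size ∧ ∑ l ∈ Finset.Icc 2 h, k ^ l ≤ B.size := by
  intro B hcomp hthr
  classical
  have hk0 : 0 < k := by omega
  have hcomp' : B.Computes (BTfun 2 k hk0 h) := hcomp
  have hthr' : DBPThrifty 2 k h hk0 B := hthr
  letI := B.fin
  have hreidx : ∑ l ∈ Finset.Icc 2 h, k ^ (h - l + 2) = ∑ l ∈ Finset.Icc 2 h, k ^ l := by
    refine Finset.sum_nbij' (i := fun l => h + 2 - l) (j := fun l => h + 2 - l) ?_ ?_ ?_ ?_ ?_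
    · intro a ha
      simp only [Finset.mem_Icc] at ha ⊢
      omega
    · intro a ha
      simp only [Finset.mem_Icc] at ha ⊢
      omega
    · intro a ha
      simp only [Finset.mem_Icc] at ha
      show h + 2 - (h + 2 - a) = a
      omega
    · intro a ha
      simp only [Finset.mem_Icc] at ha
      show h + 2 - (h + 2 - a) = a
      omega
    · intro a ha
      simp only [Finset.mem_Icc] at ha
      show k ^ (h - a + 2) = k ^ (h + 2 - a)
      congr 1
      omega
  have hmain : ∑ l ∈ Finset.Icc 2 h, k ^ l ≤ B.size := by
    calc ∑ l ∈ Finset.Icc 2 h, k ^ l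
        = ∑ l ∈ Finset.Icc 2 h, k ^ (h - l + 2) := hreidx.symm
      _ ≤ ∑ l ∈ Finset.Icc 2 h, (TELB.Slset B l).card := by
          refine Finset.sum_le_sum ?_
          intro l hl
          rw [Finset.mem_Icc] at hl
          exact TELB.count_level hk0 hk B hcomp' hthr' l hl.1 hl.2
      _ = ((Finset.Icc 2 h).biUnion (fun l => TELB.Slset B l)).card :=
          (Finset.card_biUnion (fun l _ l' _ hne => TELB.Slset_disj B l l' hne)).symm
      _ ≤ Fintype.card B.Q := Finset.card_le_univ _
      _ = B.size := rfl
  refine ⟨?_, hmain⟩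
  refine le_trans ?_ hmain
  exact Finset.single_le_sum (f := fun l => k ^ l) (fun i _ => Nat.zero_le _)
    (by rw [Finset.mem_Icc]; omega)
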